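/- arXiv:2010.05288 — 2 statements merged into one kernel-verified Lean document; each statement's English description precedes it below -/
import Mathlib

section
/- Let (Ω, 𝓕, ℙ) be a probability space and let g : ℝ → ℝ be differentiable with Lipschitz continuous derivative g′. Then the lifted functional Φ̃ : L²(Ω, ℙ; ℝ) → ℝ defined by Φ̃(ϑ) = 𝔼[g(ϑ)] is well defined (g(ϑ) is integrable for every ϑ ∈ L²) and Fréchet differentiable at every ϑ ∈ L²(Ω, ℙ; ℝ), with Fréchet derivative given by the continuous linear map v ↦ 𝔼[g′(ϑ) v]. -/
open MeasureTheory

/-- Taylor-type bound from Lipschitz derivative. -/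
lemma taylor_bound_of_lipschitz_deriv (g : ℝ → ℝ) (hg : Differentiable ℝ g) (L : NNReal)
    (hlip : LipschitzWith L (deriv g)) (x y : ℝ) :
    |g y - g x - deriv g x * (y - x)| ≤ L * (y - x) ^ 2 := by
  set f : ℝ → ℝ := fun z => g z - deriv g x * z with hf
  have hder : ∀ z, HasDerivAt f (deriv g z - deriv g x) z := by
    intro z
    have h1 : HasDerivAt (fun z : ℝ => deriv g x * z) (deriv g x * 1) z :=
      (hasDerivAt_id z).const_mul (deriv g x)
    have h2 := (hg z).hasDerivAt.sub h1
    rw [mul_one] at h2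
    exact h2
  have key : ‖f y - f x‖ ≤ (L * |y - x|) * ‖y - x‖ := by
    apply Convex.norm_image_sub_le_of_norm_deriv_le
      (fun z _ => (hder z).differentiableAt)
      (fun z hz => ?_) (convex_uIcc x y) (Set.left_mem_uIcc) (Set.right_mem_uIcc)
    have h1 : deriv f z = deriv g z - deriv g x := (hder z).deriv
    rw [h1]
    have h2 : |deriv g z - deriv g x| ≤ L * |z - x| := by
      have := hlip.dist_le_mul z x
      simpa [Real.dist_eq] using this
    have h3 : |z - x| ≤ |y - x| := by
      rcases Set.mem_uIcc.1 hz with ⟨h4, h5⟩ | ⟨h4, h5⟩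
      · rw [abs_of_nonneg (by linarith)]
        calc z - x ≤ y - x := by linarith
          _ ≤ |y - x| := le_abs_self _
      · rw [abs_of_nonpos (by linarith)]
        calc -(z - x) ≤ -(y - x) := by linarith
          _ ≤ |y - x| := neg_le_abs _
    calc ‖deriv g z - deriv g x‖ = |deriv g z - deriv g x| := rfl
      _ ≤ L * |z - x| := h2
      _ ≤ L * |y - x| := by nlinarith [h3, L.coe_nonneg]
  have : f y - f x = g y - g x - deriv g x * (y - x) := by simp [hf]; ring
  calc |g y - g x - deriv g x * (y - x)| = ‖f y - f x‖ := by rw [this, Real.norm_eq_abs]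
    _ ≤ (L * |y - x|) * ‖y - x‖ := key
    _ = L * (y - x) ^ 2 := by
        rw [Real.norm_eq_abs, mul_assoc, abs_mul_abs_self, sq]

/-- Fréchet differentiability of the lift `Φ̃(ϑ) = 𝔼[g(ϑ)]` on `L²(Ω, ℙ; ℝ)` of the linear
functional `μ ↦ ∫ g dμ`, when `g` is differentiable with Lipschitz derivative: `g(ϑ)` is
integrable for every `ϑ ∈ L²`, and `Φ̃` is Fréchet differentiable at every `ϑ` with derivative
the continuous linear map `v ↦ 𝔼[g'(ϑ) v]`. -/
theorem lift_frechet_differentiable {Ω : Type*} [MeasurableSpace Ω] (P : Measure Ω)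
    [IsProbabilityMeasure P] (g : ℝ → ℝ) (hg : Differentiable ℝ g) (L : NNReal)
    (hlip : LipschitzWith L (deriv g)) :
    ∀ ϑ : Lp ℝ 2 P,
      Integrable (fun ω => g (ϑ ω)) P ∧
      ∃ D : Lp ℝ 2 P →L[ℝ] ℝ,
        (∀ v : Lp ℝ 2 P, D v = ∫ ω, deriv g (ϑ ω) * v ω ∂P) ∧
        HasFDerivAt (fun θ : Lp ℝ 2 P => ∫ ω, g (θ ω) ∂P) D ϑ := by
  have hderiv_bound : ∀ x : ℝ, |deriv g x| ≤ |deriv g 0| + L * |x| := by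
    intro x
    have h := hlip.dist_le_mul x 0
    rw [Real.dist_eq, Real.dist_eq, sub_zero] at h
    calc |deriv g x| ≤ |deriv g x - deriv g 0| + |deriv g 0| := by
          simpa using abs_add_le (deriv g x - deriv g 0) (deriv g 0)
      _ ≤ L * |x| + |deriv g 0| := by linarith
      _ = _ := by ring
  have hg_bound : ∀ x : ℝ, |g x| ≤ |g 0| + |deriv g 0| * |x| + L * x ^ 2 := by
    intro x
    have h := taylor_bound_of_lipschitz_deriv g hg L hlip 0 x
    rw [sub_zero] at h
    have h2 : |g 0 + deriv g 0 * x| ≤ |g 0| + |deriv g 0| * |x| := by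
      calc |g 0 + deriv g 0 * x| ≤ |g 0| + |deriv g 0 * x| := abs_add_le _ _
        _ = |g 0| + |deriv g 0| * |x| := by rw [abs_mul]
    calc |g x| = |(g x - g 0 - deriv g 0 * x) + (g 0 + deriv g 0 * x)| := by ring_nf
      _ ≤ |g x - g 0 - deriv g 0 * x| + |g 0 + deriv g 0 * x| := abs_add_le _ _
      _ ≤ |g 0| + |deriv g 0| * |x| + L * x ^ 2 := by linarith
  have key_int : ∀ θ : Lp ℝ 2 P, Integrable (fun ω => g (θ ω)) P := by
    intro θ
    have hθint : Integrable (θ : Ω → ℝ) P := (Lp.memLp θ).integrable one_le_two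
    have hθsq : Integrable (fun ω => (θ ω) ^ 2) P := by
      have h := L2.integrable_inner (𝕜 := ℝ) θ θ
      apply h.congr
      filter_upwards with ω
      simp [RCLike.inner_apply, sq]
    have hmeas : AEStronglyMeasurable (fun ω => g (θ ω)) P :=
      hg.continuous.comp_aestronglyMeasurable (Lp.aestronglyMeasurable θ)
    apply Integrable.mono'
      ((integrable_const (|g 0|)).add
        ((hθint.norm.const_mul (|deriv g 0|)).add (hθsq.const_mul L))) hmeas
    filter_upwards with ω
    have := hg_bound (θ ω)
    simp only [Real.norm_eq_abs, Pi.add_apply]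
    linarith
  intro ϑ
  refine ⟨key_int ϑ, ?_⟩
  have hwmem : MemLp (fun ω => deriv g (ϑ ω)) 2 P := by
    have hb : MemLp (fun ω => |deriv g 0| + L * ‖ϑ ω‖) 2 P := by
      have h := (memLp_const (μ := P) (p := 2) (|deriv g 0|)).add
        ((Lp.memLp ϑ).norm.const_mul (L : ℝ))
      exact h
    refine MemLp.mono' hb
      (hlip.continuous.comp_aestronglyMeasurable (Lp.aestronglyMeasurable ϑ)) ?_
    filter_upwards with ω
    simp only [Real.norm_eq_abs]
    exact hderiv_bound _
  set w : Lp ℝ 2 P := hwmem.toLp _ with hw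
  set D : Lp ℝ 2 P →L[ℝ] ℝ := innerSL ℝ w with hDdef
  have hD : ∀ v : Lp ℝ 2 P, D v = ∫ ω, deriv g (ϑ ω) * v ω ∂P := by
    intro v
    have h1 : D v = ∫ ω, (w ω) * (v ω) ∂P := by
      rw [hDdef]
      rw [innerSL_apply_apply, L2.inner_def]
      apply integral_congr_ae
      filter_upwards with ω
      simp [RCLike.inner_apply, mul_comm]
    rw [h1]
    apply integral_congr_ae
    filter_upwards [hwmem.coeFn_toLp] with ω hω
    rw [← hw] at hω
    rw [hω]
  refine ⟨D, hD, ?_⟩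
  have hint3 : ∀ v : Lp ℝ 2 P, Integrable (fun ω => deriv g (ϑ ω) * v ω) P := by
    intro v
    have h := L2.integrable_inner (𝕜 := ℝ) w v
    apply h.congr
    filter_upwards [hwmem.coeFn_toLp] with ω hω
    rw [← hw] at hω
    simp [RCLike.inner_apply, hω, mul_comm]
  have keybound : ∀ v : Lp ℝ 2 P,
      |(∫ ω, g ((ϑ + v) ω) ∂P) - (∫ ω, g (ϑ ω) ∂P) - D v| ≤ L * ‖v‖ ^ 2 := by
    intro v
    have hv2 : Integrable (fun ω => (v ω) ^ 2) P := by
      have h := L2.integrable_inner (𝕜 := ℝ) v v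
      apply h.congr
      filter_upwards with ω
      simp [RCLike.inner_apply, sq]
    have hnorm : ∫ ω, (v ω) ^ 2 ∂P = ‖v‖ ^ 2 := by
      have h1 := L2.inner_def (𝕜 := ℝ) v v
      rw [real_inner_self_eq_norm_sq] at h1
      rw [h1]
      apply integral_congr_ae
      filter_upwards with ω
      simp [RCLike.inner_apply, sq]
    have hint1 : Integrable (fun ω => g (ϑ ω + v ω)) P := by
      apply (key_int (ϑ + v)).congr
      filter_upwards [Lp.coeFn_add ϑ v] with ω hω
      rw [hω]
      rfl
    have hint2 := key_int ϑ
    have hintr : Integrable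
        (fun ω => g (ϑ ω + v ω) - g (ϑ ω) - deriv g (ϑ ω) * v ω) P :=
      ((hint1.sub hint2).sub (hint3 v) : _)
    have hint12 : Integrable (fun ω => g (ϑ ω + v ω) - g (ϑ ω)) P := hint1.sub hint2
    have heq : (∫ ω, g ((ϑ + v) ω) ∂P) - (∫ ω, g (ϑ ω) ∂P) - D v
        = ∫ ω, (g (ϑ ω + v ω) - g (ϑ ω) - deriv g (ϑ ω) * v ω) ∂P := by
      have e1 : (∫ ω, g ((ϑ + v) ω) ∂P) = ∫ ω, g (ϑ ω + v ω) ∂P := by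
        apply integral_congr_ae
        filter_upwards [Lp.coeFn_add ϑ v] with ω hω
        rw [hω]
        rfl
      rw [hD v, e1, ← integral_sub hint1 hint2, ← integral_sub hint12 (hint3 v)]
    rw [heq]
    calc |∫ ω, (g (ϑ ω + v ω) - g (ϑ ω) - deriv g (ϑ ω) * v ω) ∂P|
        ≤ ∫ ω, |g (ϑ ω + v ω) - g (ϑ ω) - deriv g (ϑ ω) * v ω| ∂P :=
          by simpa [Real.norm_eq_abs] using
            norm_integral_le_integral_norm
              (fun ω => g (ϑ ω + v ω) - g (ϑ ω) - deriv g (ϑ ω) * v ω) (μ := P)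
      _ ≤ ∫ ω, L * (v ω) ^ 2 ∂P := by
          apply integral_mono hintr.abs (hv2.const_mul L)
          intro ω
          have h := taylor_bound_of_lipschitz_deriv g hg L hlip (ϑ ω) (ϑ ω + v ω)
          simpa using h
      _ = L * ‖v‖ ^ 2 := by rw [integral_const_mul, hnorm]
  rw [hasFDerivAt_iff_isLittleO_nhds_zero]
  have hbig : (fun v : Lp ℝ 2 P => (∫ ω, g ((ϑ + v) ω) ∂P) - (∫ ω, g (ϑ ω) ∂P) - D v)
      =O[nhds 0] fun v : Lp ℝ 2 P => ‖v‖ ^ 2 := by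
    apply Asymptotics.IsBigO.of_bound L
    apply Filter.Eventually.of_forall
    intro v
    have h := keybound v
    simpa [Real.norm_eq_abs, abs_of_nonneg (sq_nonneg ‖v‖)] using h
  exact hbig.trans_isLittleO (Asymptotics.isLittleO_norm_pow_id one_lt_two)
end

section
/- (Interpolation formula along laws.) Fix K > 0. Let Φ : 𝒦_K → ℝ admit a jointly continuous linear derivative F : 𝒦_K × ℝ → ℝ such that for each μ ∈ 𝒦_K the map x ↦ F(μ, x) is continuously differentiable and (μ, x) ↦ ∂_x F(μ, x) is jointly continuous on 𝒦_K × [−K, K]. Let ξ and η be random variables, defined on a common probability space, taking values in [−K, K]. Then, writing ℙ_ζ for the law of a random variable ζ, Φ(ℙ_η) − Φ(ℙ_ξ) = ∫₀¹ 𝔼[ ∂_x F( ℙ_{ξ + h(η − ξ)}, ξ + h(η − ξ) ) · (η − ξ) ] dh. -/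
open MeasureTheory Filter Topology Set

/-- `KK K` is the set of Borel probability measures on `ℝ` whose support is contained in
`[-K, K]`, i.e. which give full mass to `[-K, K]`. -/
def KK (K : ℝ) : Set (ProbabilityMeasure ℝ) :=
  {μ | μ.toMeasure (Set.Icc (-K) K) = 1}

/-- The convex combination `h μ + (1 - h) ν` of two probability measures, for `h ∈ [0, 1]`
(and defined as `μ` for `h ∉ [0, 1]`, which is irrelevant). -/
noncomputable def mix (h : ℝ) (μ ν : ProbabilityMeasure ℝ) : ProbabilityMeasure ℝ :=
  if hh : 0 ≤ h ∧ h ≤ 1 then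
    ⟨ENNReal.ofReal h • μ.toMeasure + ENNReal.ofReal (1 - h) • ν.toMeasure,
      ⟨by
        rw [Measure.add_apply, Measure.smul_apply, Measure.smul_apply,
          measure_univ, measure_univ, smul_eq_mul, smul_eq_mul, mul_one, mul_one,
          ← ENNReal.ofReal_add hh.1 (by linarith : (0 : ℝ) ≤ 1 - h)]
        norm_num⟩⟩
  else μ

lemma mix_toMeasure {h : ℝ} (hh : 0 ≤ h) (hh1 : h ≤ 1) (μ ν : ProbabilityMeasure ℝ) :
    (mix h μ ν).toMeasure
      = ENNReal.ofReal h • μ.toMeasure + ENNReal.ofReal (1 - h) • ν.toMeasure := by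
  rw [congrArg ProbabilityMeasure.toMeasure (show mix h μ ν = _ from dif_pos (⟨hh, hh1⟩ : 0 ≤ h ∧ h ≤ 1))]
  rfl

lemma mix_self (h : ℝ) (μ : ProbabilityMeasure ℝ) : mix h μ μ = μ := by
  by_cases hh : 0 ≤ h ∧ h ≤ 1
  · apply ProbabilityMeasure.toMeasure_injective
    show (mix h μ μ).toMeasure = μ.toMeasure
    rw [mix_toMeasure hh.1 hh.2]
    ext s hs
    simp only [Measure.add_apply, Measure.smul_apply, smul_eq_mul]
    rw [← add_mul, ← ENNReal.ofReal_add hh.1 (by linarith)]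
    norm_num
  · exact dif_neg hh

lemma mix_mem_KK {K : ℝ} {μ ν : ProbabilityMeasure ℝ} (h : ℝ)
    (hμ : μ ∈ KK K) (hν : ν ∈ KK K) : mix h μ ν ∈ KK K := by
  by_cases hh : 0 ≤ h ∧ h ≤ 1
  · show (mix h μ ν).toMeasure _ = 1
    rw [mix_toMeasure hh.1 hh.2]
    simp only [Measure.add_apply, Measure.smul_apply, smul_eq_mul]
    rw [hμ, hν, mul_one, mul_one, ← ENNReal.ofReal_add hh.1 (by linarith)]
    norm_num
  · rw [show mix h μ ν = μ from dif_neg hh]; exact hμ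

lemma integral_mix {h : ℝ} (hh : 0 ≤ h) (hh1 : h ≤ 1) (μ ν : ProbabilityMeasure ℝ)
    {g : ℝ → ℝ} (hgμ : Integrable g μ.toMeasure) (hgν : Integrable g ν.toMeasure) :
    ∫ x, g x ∂(mix h μ ν).toMeasure
      = h * ∫ x, g x ∂μ.toMeasure + (1 - h) * ∫ x, g x ∂ν.toMeasure := by
  rw [mix_toMeasure hh hh1, integral_add_measure (hgμ.smul_measure ENNReal.ofReal_ne_top)
    (hgν.smul_measure ENNReal.ofReal_ne_top), integral_smul_measure, integral_smul_measure,
    ENNReal.toReal_ofReal hh, ENNReal.toReal_ofReal (by linarith), smul_eq_mul, smul_eq_mul]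

lemma continuousOn_mix :
    ContinuousOn (fun p : ℝ × ProbabilityMeasure ℝ × ProbabilityMeasure ℝ =>
      mix p.1 p.2.1 p.2.2) (Set.Icc (0:ℝ) 1 ×ˢ (Set.univ : Set (ProbabilityMeasure ℝ × ProbabilityMeasure ℝ))) := by
  intro p₀ hp₀
  have hp₀1 : p₀.1 ∈ Set.Icc (0:ℝ) 1 := hp₀.1
  apply ProbabilityMeasure.tendsto_iff_forall_integral_tendsto.mpr
  intro f
  have hform : ∀ q : ℝ × ProbabilityMeasure ℝ × ProbabilityMeasure ℝ,
      q ∈ Set.Icc (0:ℝ) 1 ×ˢ (Set.univ : Set (ProbabilityMeasure ℝ × ProbabilityMeasure ℝ)) →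
      ∫ x, f x ∂(mix q.1 q.2.1 q.2.2).toMeasure
        = q.1 * ∫ x, f x ∂q.2.1.toMeasure + (1 - q.1) * ∫ x, f x ∂q.2.2.toMeasure := by
    intro q hq
    exact integral_mix hq.1.1 hq.1.2 _ _ (f.integrable _) (f.integrable _)
  have hcont : ContinuousOn (fun q : ℝ × ProbabilityMeasure ℝ × ProbabilityMeasure ℝ =>
      q.1 * ∫ x, f x ∂q.2.1.toMeasure + (1 - q.1) * ∫ x, f x ∂q.2.2.toMeasure) (Set.Icc (0:ℝ) 1 ×ˢ Set.univ) := by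
    apply Continuous.continuousOn
    apply Continuous.add
    · exact continuous_fst.mul
        ((ProbabilityMeasure.continuous_integral_boundedContinuousFunction f).comp
          (continuous_fst.comp continuous_snd))
    · exact (continuous_const.sub continuous_fst).mul
        ((ProbabilityMeasure.continuous_integral_boundedContinuousFunction f).comp
          (continuous_snd.comp continuous_snd))
  have := (hcont p₀ hp₀).tendsto
  rw [← hform p₀ hp₀] at this
  apply this.congr'
  filter_upwards [self_mem_nhdsWithin] with q hq
  exact (hform q hq).symm

/-- `F : 𝒫 × ℝ → ℝ` is a linear derivative of `Φ : 𝒫 → ℝ` on a (convex) set `P` of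
probability measures:
`Φ(μ) - Φ(ν) = ∫₀¹ ∫_ℝ F(hμ + (1-h)ν, x) (μ - ν)(dx) dh` for all `μ, ν ∈ P`, where the
integral against the signed measure `μ - ν` is the difference of the integrals. -/
def IsLinearDerivOn (P : Set (ProbabilityMeasure ℝ))
    (Φ : ProbabilityMeasure ℝ → ℝ) (F : ProbabilityMeasure ℝ → ℝ → ℝ) : Prop :=
  ∀ μ ∈ P, ∀ ν ∈ P,
    Φ μ - Φ ν =
      ∫ h in (0:ℝ)..1,
        ((∫ x, F (mix h μ ν) x ∂μ.toMeasure) - ∫ x, F (mix h μ ν) x ∂ν.toMeasure)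

/-- The law `ℙ_f` of a measurable real random variable `f` on a probability space, as a
probability measure on `ℝ`. -/
noncomputable def law {Ω : Type*} [MeasurableSpace Ω] (P : Measure Ω) [IsProbabilityMeasure P]
    {f : Ω → ℝ} (hf : Measurable f) : ProbabilityMeasure ℝ :=
  ⟨P.map f, Measure.isProbabilityMeasure_map hf.aemeasurable⟩

lemma convex_Icc_mem {a b lo hi t : ℝ} (ha : a ∈ Set.Icc lo hi) (hb : b ∈ Set.Icc lo hi)
    (ht0 : 0 ≤ t) (ht1 : t ≤ 1) : a + t * (b - a) ∈ Set.Icc lo hi := by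
  constructor
  · nlinarith [mul_nonneg ht0 (sub_nonneg.2 hb.1), mul_nonneg (sub_nonneg.2 ht1) (sub_nonneg.2 ha.1)]
  · nlinarith [mul_nonneg ht0 (sub_nonneg.2 hb.2), mul_nonneg (sub_nonneg.2 ht1) (sub_nonneg.2 ha.2)]

/-- Interpolation formula along laws: if `Φ : 𝒦_K → ℝ` admits a jointly continuous linear
derivative `F` which is `C¹` in the space variable with jointly continuous space-derivative
`F₁ = ∂_x F` on `𝒦_K × [-K, K]`, and `ξ, η` are random variables on a common probability space
taking values in `[-K, K]`, then
`Φ(ℙ_η) - Φ(ℙ_ξ) = ∫₀¹ 𝔼[ ∂_x F(ℙ_{ξ + h(η - ξ)}, ξ + h(η - ξ)) · (η - ξ) ] dh`. -/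
theorem interpolation_along_laws {Ω : Type*} [MeasurableSpace Ω] (P : Measure Ω)
    [IsProbabilityMeasure P] (K : ℝ) (hK : 0 < K)
    (Φ : ProbabilityMeasure ℝ → ℝ) (F F₁ : ProbabilityMeasure ℝ → ℝ → ℝ)
    (hlin : IsLinearDerivOn (KK K) Φ F)
    (hFcont : ContinuousOn (fun q : ProbabilityMeasure ℝ × ℝ => F q.1 q.2)
      (KK K ×ˢ Set.univ))
    (hF1 : ∀ μ ∈ KK K, ∀ x : ℝ, HasDerivAt (F μ) (F₁ μ x) x)
    (hF1cont : ContinuousOn (fun q : ProbabilityMeasure ℝ × ℝ => F₁ q.1 q.2)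
      (KK K ×ˢ Set.Icc (-K) K))
    (ξ η : Ω → ℝ) (hξ : Measurable ξ) (hη : Measurable η)
    (hξK : ∀ ω, ξ ω ∈ Set.Icc (-K) K) (hηK : ∀ ω, η ω ∈ Set.Icc (-K) K) :
    Φ (law P hη) - Φ (law P hξ) =
      ∫ h in (0:ℝ)..1,
        ∫ ω, F₁ (law P (hξ.add ((hη.sub hξ).const_mul h)))
            (ξ ω + h * (η ω - ξ ω)) * (η ω - ξ ω) ∂P := by
  classical
  set X : ℝ → Ω → ℝ := fun h ω => ξ ω + h * (η ω - ξ ω) with hXdef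
  have hXm : ∀ h : ℝ, Measurable (X h) := fun h => hξ.add ((hη.sub hξ).const_mul h)
  set μm : ℝ → ProbabilityMeasure ℝ := fun h => law P (hXm h) with hμmdef
  -- basic facts
  have hcc : ∀ ω, |η ω - ξ ω| ≤ 2 * K := fun ω =>
    abs_le.2 ⟨by linarith [(hηK ω).1, (hξK ω).2], by linarith [(hηK ω).2, (hξK ω).1]⟩
  have hX01 : ∀ h ∈ Set.Icc (0:ℝ) 1, ∀ ω, X h ω ∈ Set.Icc (-K) K :=
    fun h hh ω => convex_Icc_mem (hξK ω) (hηK ω) hh.1 hh.2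
  have hμK : ∀ h ∈ Set.Icc (0:ℝ) 1, μm h ∈ KK K := by
    intro h hh
    show (P.map (X h)) (Set.Icc (-K) K) = 1
    rw [Measure.map_apply (hXm h) measurableSet_Icc]
    have : X h ⁻¹' Set.Icc (-K) K = Set.univ := Set.eq_univ_of_forall fun ω => hX01 h hh ω
    rw [this, measure_univ]
  have hmap : ∀ (h : ℝ) (g : ℝ → ℝ), AEStronglyMeasurable g (P.map (X h)) →
      ∫ x, g x ∂(μm h).toMeasure = ∫ ω, g (X h ω) ∂P :=
    fun h g hg => integral_map (hXm h).aemeasurable hg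
  have μmCont : Continuous μm := by
    rw [continuous_iff_continuousAt]
    intro h₀
    apply ProbabilityMeasure.tendsto_iff_forall_integral_tendsto.mpr
    intro f
    have hrw : ∀ t : ℝ, ∫ x, f x ∂(μm t).toMeasure = ∫ ω, f (X t ω) ∂P :=
      fun t => hmap t f f.continuous.aestronglyMeasurable
    simp only [hrw]
    apply tendsto_integral_filter_of_dominated_convergence (fun _ => ‖f‖)
    · exact Eventually.of_forall fun t =>
        (f.continuous.measurable.comp (hXm t)).aestronglyMeasurable
    · exact Eventually.of_forall fun t => ae_of_all _ fun ω => f.norm_coe_le_norm _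
    · exact integrable_const _
    · refine ae_of_all _ fun ω => (f.continuous.tendsto _).comp ?_
      exact Continuous.tendsto (by fun_prop) h₀
  have hF1meas : ∀ ν ∈ KK K, Measurable (F₁ ν) := by
    intro ν hν
    have : F₁ ν = deriv (F ν) := funext fun x => ((hF1 ν hν x).deriv).symm
    rw [this]; exact measurable_deriv _
  have hFcontx : ∀ ν ∈ KK K, Continuous (F ν) := by
    intro ν hν
    rw [← continuousOn_univ]
    exact hFcont.comp ((continuous_const.prodMk continuous_id).continuousOn)
      (fun x _ => ⟨hν, trivial⟩)
  have hF1slice : ∀ ν ∈ KK K, ContinuousOn (F₁ ν) (Set.Icc (-K) K) := fun ν hν =>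
    hF1cont.comp ((continuous_const.prodMk continuous_id).continuousOn)
      (fun x hx => ⟨hν, hx⟩)
  have hF1tend : ∀ {ι : Type} {l : Filter ι} {ν : ι → ProbabilityMeasure ℝ} {y : ι → ℝ}
      {ν₀ : ProbabilityMeasure ℝ} {y₀ : ℝ}, ν₀ ∈ KK K → y₀ ∈ Set.Icc (-K) K →
      Tendsto ν l (𝓝 ν₀) → Tendsto y l (𝓝 y₀) →
      (∀ᶠ i in l, ν i ∈ KK K) → (∀ᶠ i in l, y i ∈ Set.Icc (-K) K) →
      Tendsto (fun i => F₁ (ν i) (y i)) l (𝓝 (F₁ ν₀ y₀)) := by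
    intro ι l ν y ν₀ y₀ hν₀ hy₀ hν hy hνm hym
    have h1 : Tendsto (fun i => (ν i, y i)) l (𝓝[KK K ×ˢ Set.Icc (-K) K] (ν₀, y₀)) := by
      rw [tendsto_nhdsWithin_iff]
      exact ⟨hν.prodMk_nhds hy, by filter_upwards [hνm, hym] with i h1 h2 using ⟨h1, h2⟩⟩
    exact ((hF1cont (ν₀, y₀) ⟨hν₀, hy₀⟩).tendsto).comp h1
  have hmixtend : ∀ {ι : Type} {l : Filter ι} {s : ι → ℝ} {a b : ι → ProbabilityMeasure ℝ}
      {s₀ : ℝ} {a₀ b₀ : ProbabilityMeasure ℝ}, s₀ ∈ Set.Icc (0:ℝ) 1 →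
      Tendsto s l (𝓝 s₀) → Tendsto a l (𝓝 a₀) → Tendsto b l (𝓝 b₀) →
      (∀ᶠ i in l, s i ∈ Set.Icc (0:ℝ) 1) →
      Tendsto (fun i => mix (s i) (a i) (b i)) l (𝓝 (mix s₀ a₀ b₀)) := by
    intro ι l s a b s₀ a₀ b₀ hs₀ hs ha hb hsm
    have h1 : Tendsto (fun i => (s i, a i, b i))
        l (𝓝[Set.Icc (0:ℝ) 1 ×ˢ Set.univ] (s₀, a₀, b₀)) := by
      rw [tendsto_nhdsWithin_iff]
      exact ⟨hs.prodMk_nhds (ha.prodMk_nhds hb),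
        by filter_upwards [hsm] with i h1 using ⟨h1, trivial⟩⟩
    exact ((continuousOn_mix (s₀, a₀, b₀) ⟨hs₀, trivial⟩).tendsto).comp h1
  -- compact set of measures and bounds
  set T : Set (ProbabilityMeasure ℝ) :=
    (fun p : ℝ × ℝ × ℝ => mix p.1 (μm p.2.1) (μm p.2.2)) ''
      (Set.Icc (0:ℝ) 1 ×ˢ Set.Icc (0:ℝ) 1 ×ˢ Set.Icc (0:ℝ) 1) with hTdef
  have hTc : IsCompact T := by
    apply IsCompact.image_of_continuousOn
      (isCompact_Icc.prod (isCompact_Icc.prod isCompact_Icc))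
    exact continuousOn_mix.comp
      (Continuous.continuousOn (continuous_fst.prodMk
        ((μmCont.comp (continuous_fst.comp continuous_snd)).prodMk
          (μmCont.comp (continuous_snd.comp continuous_snd)))))
      (fun p hp => ⟨hp.1, trivial⟩)
  have hTKK : T ⊆ KK K := by
    rintro _ ⟨p, hp, rfl⟩
    exact mix_mem_KK _ (hμK _ hp.2.1) (hμK _ hp.2.2)
  have hmixT : ∀ s ∈ Set.Icc (0:ℝ) 1, ∀ t ∈ Set.Icc (0:ℝ) 1, ∀ r ∈ Set.Icc (0:ℝ) 1,
      mix s (μm t) (μm r) ∈ T :=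
    fun s hs t ht r hr => ⟨(s, t, r), ⟨hs, ht, hr⟩, rfl⟩
  have hμmT : ∀ t ∈ Set.Icc (0:ℝ) 1, μm t ∈ T := by
    intro t ht
    have := hmixT 0 (by norm_num) t ht t ht
    rwa [mix_self] at this
  obtain ⟨M, hM0, hM⟩ : ∃ M : ℝ, 0 ≤ M ∧ ∀ ν ∈ T, ∀ x ∈ Set.Icc (-K) K, |F₁ ν x| ≤ M := by
    obtain ⟨M, hM⟩ := (hTc.prod isCompact_Icc).exists_bound_of_continuousOn
      (hF1cont.mono (Set.prod_mono hTKK Set.Subset.rfl))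
    exact ⟨max M 0, le_max_right _ _, fun ν hν x hx =>
      le_trans (by simpa using hM (ν, x) ⟨hν, hx⟩) (le_max_left _ _)⟩
  obtain ⟨M', hM'⟩ : ∃ M' : ℝ, ∀ ν ∈ T, ∀ x ∈ Set.Icc (-K) K, |F ν x| ≤ M' := by
    obtain ⟨M', hM'⟩ := (hTc.prod isCompact_Icc).exists_bound_of_continuousOn
      (hFcont.mono (Set.prod_mono hTKK (Set.subset_univ _)))
    exact ⟨M', fun ν hν x hx => by simpa using hM' (ν, x) ⟨hν, hx⟩⟩
  have hccInt : Integrable (fun ω => η ω - ξ ω) P :=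
    (integrable_const (2 * K)).mono' (hη.sub hξ).aestronglyMeasurable
      (ae_of_all _ fun ω => by simpa using hcc ω)
  -- the candidate derivative
  set ψ : ℝ → ℝ := fun t => ∫ ω, F₁ (μm t) (X t ω) * (η ω - ξ ω) ∂P with hψdef
  have hψmeas : ∀ t ∈ Set.Icc (0:ℝ) 1,
      AEStronglyMeasurable (fun ω => F₁ (μm t) (X t ω) * (η ω - ξ ω)) P :=
    fun t ht => (((hF1meas _ (hμK t ht)).comp (hXm t)).mul (hη.sub hξ)).aestronglyMeasurable
  have hψcont : ContinuousOn ψ (Set.Icc (0:ℝ) 1) := by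
    intro t₀ ht₀
    show Tendsto ψ (𝓝[Set.Icc (0:ℝ) 1] t₀) (𝓝 (ψ t₀))
    simp only [hψdef]
    apply tendsto_integral_filter_of_dominated_convergence (fun ω => M * |η ω - ξ ω|)
    · filter_upwards [self_mem_nhdsWithin] with t ht using hψmeas t ht
    · filter_upwards [self_mem_nhdsWithin] with t ht
      refine ae_of_all _ fun ω => ?_
      rw [Real.norm_eq_abs, abs_mul]
      exact mul_le_mul_of_nonneg_right (hM _ (hμmT t ht) _ (hX01 t ht ω)) (abs_nonneg _)
    · exact hccInt.abs.const_mul M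
    · refine ae_of_all _ fun ω => Tendsto.mul_const _ ?_
      refine hF1tend (hμK t₀ ht₀) (hX01 t₀ ht₀ ω) ?_ ?_ ?_ ?_
      · exact (μmCont.tendsto t₀).mono_left nhdsWithin_le_nhds
      · exact (Continuous.tendsto (by fun_prop) t₀).mono_left nhdsWithin_le_nhds
      · filter_upwards [self_mem_nhdsWithin] with t ht using hμK t ht
      · filter_upwards [self_mem_nhdsWithin] with t ht using hX01 t ht ω
  -- the key derivative computation
  have key : ∀ h ∈ Set.Icc (0:ℝ) 1,
      HasDerivWithinAt (fun t => Φ (μm t)) (ψ h) (Set.Icc 0 1) h := by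
    intro h hh
    rw [hasDerivWithinAt_iff_tendsto_slope]
    set l := 𝓝[Set.Icc (0:ℝ) 1 \ {h}] h with hldef
    set Jp : ℝ × ℝ → ℝ := fun p =>
      ∫ ω, (∫ u in (0:ℝ)..1, F₁ (mix p.2 (μm p.1) (μm h)) (X (h + u * (p.1 - h)) ω)) *
        (η ω - ξ ω) ∂P with hJpdef
    have hseg : ∀ a ∈ Set.Icc (0:ℝ) 1, ∀ u ∈ Set.Icc (0:ℝ) 1,
        h + u * (a - h) ∈ Set.Icc (0:ℝ) 1 :=
      fun a ha u hu => convex_Icc_mem hh ha hu.1 hu.2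
    -- measurability of the integrand of Jp
    have hmeasJ : ∀ p : ℝ × ℝ, p ∈ Set.Icc (0:ℝ) 1 ×ˢ Set.Icc (0:ℝ) 1 →
        AEStronglyMeasurable (fun ω =>
          (∫ u in (0:ℝ)..1, F₁ (mix p.2 (μm p.1) (μm h)) (X (h + u * (p.1 - h)) ω)) *
            (η ω - ξ ω)) P := by
      intro p hp
      have hνK : mix p.2 (μm p.1) (μm h) ∈ KK K :=
        mix_mem_KK _ (hμK _ hp.1) (hμK _ hh)
      have hj : Measurable (fun q : Ω × ℝ =>
          F₁ (mix p.2 (μm p.1) (μm h)) (X (h + q.2 * (p.1 - h)) q.1)) := by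
        apply (hF1meas _ hνK).comp
        show Measurable fun q : Ω × ℝ => ξ q.1 + (h + q.2 * (p.1 - h)) * (η q.1 - ξ q.1)
        fun_prop
      have h1 : AEStronglyMeasurable (fun ω =>
          ∫ u in Set.Ioc (0:ℝ) 1, F₁ (mix p.2 (μm p.1) (μm h)) (X (h + u * (p.1 - h)) ω)) P :=
        (hj.aestronglyMeasurable
          (μ := P.prod (volume.restrict (Set.Ioc (0:ℝ) 1)))).integral_prod_right'
      have h2 : AEStronglyMeasurable (fun ω =>
          ∫ u in (0:ℝ)..1, F₁ (mix p.2 (μm p.1) (μm h)) (X (h + u * (p.1 - h)) ω)) P := by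
        simpa only [intervalIntegral.integral_of_le zero_le_one] using h1
      exact h2.mul (hη.sub hξ).aestronglyMeasurable
    -- uniform bound for the integrand of Jp
    have hbndJ : ∀ p : ℝ × ℝ, p ∈ Set.Icc (0:ℝ) 1 ×ˢ Set.Icc (0:ℝ) 1 → ∀ ω,
        ‖(∫ u in (0:ℝ)..1, F₁ (mix p.2 (μm p.1) (μm h)) (X (h + u * (p.1 - h)) ω)) *
          (η ω - ξ ω)‖ ≤ M * |η ω - ξ ω| := by
      intro p hp ω
      rw [Real.norm_eq_abs, abs_mul]
      refine mul_le_mul_of_nonneg_right ?_ (abs_nonneg _)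
      have := intervalIntegral.norm_integral_le_of_norm_le_const (a := (0:ℝ)) (b := 1) (C := M)
        (f := fun u => F₁ (mix p.2 (μm p.1) (μm h)) (X (h + u * (p.1 - h)) ω)) ?_
      · simpa using this
      · intro u hu
        rw [Set.uIoc_of_le zero_le_one] at hu
        have huI : u ∈ Set.Icc (0:ℝ) 1 := Set.Ioc_subset_Icc_self hu
        rw [Real.norm_eq_abs]
        exact hM _ (hmixT _ hp.2 _ hp.1 _ hh) _ (hX01 _ (hseg _ hp.1 _ huI) ω)
    -- joint continuity of Jp
    have hJCont : ContinuousOn Jp (Set.Icc (0:ℝ) 1 ×ˢ Set.Icc (0:ℝ) 1) := by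
      intro p₀ hp₀
      show Tendsto Jp (𝓝[Set.Icc (0:ℝ) 1 ×ˢ Set.Icc (0:ℝ) 1] p₀) (𝓝 (Jp p₀))
      simp only [hJpdef]
      apply tendsto_integral_filter_of_dominated_convergence (fun ω => M * |η ω - ξ ω|)
      · filter_upwards [self_mem_nhdsWithin] with p hp using hmeasJ p hp
      · filter_upwards [self_mem_nhdsWithin] with p hp using
          ae_of_all _ fun ω => hbndJ p hp ω
      · exact hccInt.abs.const_mul M
      · refine ae_of_all _ fun ω => Tendsto.mul_const _ ?_
        apply intervalIntegral.tendsto_integral_filter_of_dominated_convergence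
          (bound := fun _ => M)
        · filter_upwards [self_mem_nhdsWithin] with p hp
          have hνK : mix p.2 (μm p.1) (μm h) ∈ KK K :=
            mix_mem_KK _ (hμK _ hp.1) (hμK _ hh)
          apply Measurable.aestronglyMeasurable
          apply (hF1meas _ hνK).comp
          show Measurable fun u : ℝ => ξ ω + (h + u * (p.1 - h)) * (η ω - ξ ω)
          fun_prop
        · filter_upwards [self_mem_nhdsWithin] with p hp
          refine ae_of_all _ fun u hu => ?_
          rw [Set.uIoc_of_le zero_le_one] at hu
          have huI : u ∈ Set.Icc (0:ℝ) 1 := Set.Ioc_subset_Icc_self hu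
          rw [Real.norm_eq_abs]
          exact hM _ (hmixT _ hp.2 _ hp.1 _ hh) _ (hX01 _ (hseg _ hp.1 _ huI) ω)
        · exact intervalIntegrable_const
        · refine ae_of_all _ fun u hu => ?_
          rw [Set.uIoc_of_le zero_le_one] at hu
          have huI : u ∈ Set.Icc (0:ℝ) 1 := Set.Ioc_subset_Icc_self hu
          refine hF1tend (hTKK (hmixT _ hp₀.2 _ hp₀.1 _ hh))
            (hX01 _ (hseg _ hp₀.1 _ huI) ω) ?_ ?_ ?_ ?_
          · refine hmixtend hp₀.2 ?_ ?_ ?_ ?_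
            · exact (continuous_snd.tendsto p₀).mono_left nhdsWithin_le_nhds
            · exact ((μmCont.comp continuous_fst).tendsto p₀).mono_left nhdsWithin_le_nhds
            · exact tendsto_const_nhds
            · filter_upwards [self_mem_nhdsWithin] with p hp using hp.2
          · refine (Continuous.tendsto ?_ p₀).mono_left nhdsWithin_le_nhds
            show Continuous fun p : ℝ × ℝ => ξ ω + (h + u * (p.1 - h)) * (η ω - ξ ω)
            fun_prop
          · filter_upwards [self_mem_nhdsWithin] with p hp using
              hTKK (hmixT _ hp.2 _ hp.1 _ hh)
          · filter_upwards [self_mem_nhdsWithin] with p hp using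
              hX01 _ (hseg _ hp.1 _ huI) ω
    -- value of Jp on the diagonal
    have hJdiag : ∀ s : ℝ, Jp (h, s) = ψ h := by
      intro s
      simp only [hJpdef, hψdef, mix_self, sub_self, mul_zero, add_zero,
        intervalIntegral.integral_const, smul_eq_mul, sub_zero, one_mul]
    -- slope equality
    have claimA : ∀ h' ∈ Set.Icc (0:ℝ) 1 \ {h},
        slope (fun t => Φ (μm t)) h h' = ∫ s in (0:ℝ)..1, Jp (h', s) := by
      intro h' hh'
      have hne : h' - h ≠ 0 := sub_ne_zero.2 hh'.2
      rw [slope_def_field]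
      show (Φ (μm h') - Φ (μm h)) / (h' - h) = _
      rw [hlin (μm h') (hμK h' hh'.1) (μm h) (hμK h hh)]
      have hEq : Set.EqOn (fun s =>
          (∫ x, F (mix s (μm h') (μm h)) x ∂(μm h').toMeasure) -
            ∫ x, F (mix s (μm h') (μm h)) x ∂(μm h).toMeasure)
          (fun s => (h' - h) * Jp (h', s)) (Set.uIcc (0:ℝ) 1) := by
        intro s hs
        rw [Set.uIcc_of_le zero_le_one] at hs
        set ν := mix s (μm h') (μm h) with hνdef
        have hνT : ν ∈ T := hmixT s hs h' hh'.1 h hh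
        have hνK : ν ∈ KK K := hTKK hνT
        have e1 : ∫ x, F ν x ∂(μm h').toMeasure = ∫ ω, F ν (X h' ω) ∂P :=
          hmap h' _ (hFcontx ν hνK).aestronglyMeasurable
        have e2 : ∫ x, F ν x ∂(μm h).toMeasure = ∫ ω, F ν (X h ω) ∂P :=
          hmap h _ (hFcontx ν hνK).aestronglyMeasurable
        have i1 : Integrable (fun ω => F ν (X h' ω)) P :=
          (integrable_const M').mono'
            (((hFcontx ν hνK).measurable.comp (hXm h')).aestronglyMeasurable)
            (ae_of_all _ fun ω => by
              simpa using hM' ν hνT _ (hX01 h' hh'.1 ω))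
        have i2 : Integrable (fun ω => F ν (X h ω)) P :=
          (integrable_const M').mono'
            (((hFcontx ν hνK).measurable.comp (hXm h)).aestronglyMeasurable)
            (ae_of_all _ fun ω => by
              simpa using hM' ν hνT _ (hX01 h hh ω))
        have ftc : ∀ ω, F ν (X h' ω) - F ν (X h ω) =
            (h' - h) * ((∫ u in (0:ℝ)..1, F₁ ν (X (h + u * (h' - h)) ω)) * (η ω - ξ ω)) := by
          intro ω
          have hd : ∀ t : ℝ, HasDerivAt (fun t => F ν (X t ω))
              (F₁ ν (X t ω) * (η ω - ξ ω)) t := by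
            intro t
            have h1 : HasDerivAt (fun t : ℝ => X t ω) (η ω - ξ ω) t := by
              exact (hasDerivAt_mul_const (x := t) (η ω - ξ ω)).const_add (ξ ω)
            exact (hF1 ν hνK (X t ω)).comp t h1
          have hsub : Set.uIcc h h' ⊆ Set.Icc (0:ℝ) 1 := by
            rw [Set.uIcc_eq_union]
            exact Set.union_subset (Set.Icc_subset_Icc hh.1 hh'.1.2)
              (Set.Icc_subset_Icc hh'.1.1 hh.2)
          have hII : IntervalIntegrable (fun t => F₁ ν (X t ω) * (η ω - ξ ω)) volume h h' := by
            apply ContinuousOn.intervalIntegrable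
            apply ContinuousOn.mul _ continuousOn_const
            refine (hF1slice ν hνK).comp (Continuous.continuousOn ?_) ?_
            · show Continuous fun t : ℝ => ξ ω + t * (η ω - ξ ω); fun_prop
            · intro t ht
              exact hX01 t (hsub ht) ω
          have hftc := intervalIntegral.integral_eq_sub_of_hasDerivAt
            (f := fun t => F ν (X t ω)) (fun t _ => hd t) hII
          rw [← hftc]
          have hcv := intervalIntegral.integral_comp_mul_add (a := (0:ℝ)) (b := 1)
            (fun t => F₁ ν (X t ω)) hne h
          simp only [show ∀ u:ℝ, (h' - h) * u + h = h + u * (h' - h) from fun u => by ring,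
            mul_zero, zero_add, mul_one] at hcv
          have : h' - h + h = h' := by ring
          rw [this] at hcv
          rw [intervalIntegral.integral_mul_const, hcv]
          rw [smul_eq_mul]; field_simp
        calc (∫ x, F ν x ∂(μm h').toMeasure) - ∫ x, F ν x ∂(μm h).toMeasure
            = (∫ ω, F ν (X h' ω) ∂P) - ∫ ω, F ν (X h ω) ∂P := by rw [e1, e2]
          _ = ∫ ω, (F ν (X h' ω) - F ν (X h ω)) ∂P := (integral_sub i1 i2).symm
          _ = ∫ ω, (h' - h) *
              ((∫ u in (0:ℝ)..1, F₁ ν (X (h + u * (h' - h)) ω)) * (η ω - ξ ω)) ∂P :=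
                integral_congr_ae (ae_of_all _ ftc)
          _ = (h' - h) * Jp (h', s) := by rw [integral_const_mul]
      rw [intervalIntegral.integral_congr hEq, intervalIntegral.integral_const_mul]
      field_simp
    -- limit
    have claimB : Tendsto (fun h' => ∫ s in (0:ℝ)..1, Jp (h', s)) l (𝓝 (ψ h)) := by
      have hψ_eq : ψ h = ∫ s in (0:ℝ)..1, Jp (h, s) := by
        rw [intervalIntegral.integral_congr (g := fun _ => ψ h) (fun s _ => hJdiag s)]
        simp
      rw [hψ_eq]
      apply intervalIntegral.tendsto_integral_filter_of_dominated_convergence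
        (bound := fun _ => M * (2 * K))
      · filter_upwards [self_mem_nhdsWithin] with h' hh'
        have hcont : ContinuousOn (fun s => Jp (h', s)) (Set.Icc (0:ℝ) 1) :=
          hJCont.comp
            (Continuous.continuousOn (continuous_const.prodMk continuous_id))
            (fun s hs => ⟨hh'.1, hs⟩)
        refine (hcont.aestronglyMeasurable measurableSet_Icc).mono_measure
          (Measure.restrict_mono ?_ le_rfl)
        rw [Set.uIoc_of_le zero_le_one]
        exact Set.Ioc_subset_Icc_self
      · filter_upwards [self_mem_nhdsWithin] with h' hh'
        refine ae_of_all _ fun s hs => ?_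
        rw [Set.uIoc_of_le zero_le_one] at hs
        have hsI : s ∈ Set.Icc (0:ℝ) 1 := Set.Ioc_subset_Icc_self hs
        have hb := norm_integral_le_of_norm_le_const (μ := P) (C := M * (2 * K))
          (f := fun ω => (∫ u in (0:ℝ)..1,
            F₁ (mix s (μm h') (μm h)) (X (h + u * (h' - h)) ω)) * (η ω - ξ ω))
          (ae_of_all _ fun ω => le_trans (hbndJ (h', s) ⟨hh'.1, hsI⟩ ω)
            (mul_le_mul_of_nonneg_left (hcc ω) hM0))
        simpa using hb
      · exact intervalIntegrable_const
      · refine ae_of_all _ fun s hs => ?_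
        rw [Set.uIoc_of_le zero_le_one] at hs
        have hsI : s ∈ Set.Icc (0:ℝ) 1 := Set.Ioc_subset_Icc_self hs
        have : Tendsto (fun h' => Jp (h', s)) l (𝓝 (Jp (h, s))) := by
          apply ((hJCont (h, s) ⟨hh, hsI⟩).tendsto).comp
          rw [tendsto_nhdsWithin_iff]
          constructor
          · exact ((continuous_id.prodMk continuous_const).tendsto h).mono_left
              nhdsWithin_le_nhds
          · filter_upwards [self_mem_nhdsWithin] with h' hh' using ⟨hh'.1, hsI⟩
        exact this
    refine claimB.congr' ?_
    filter_upwards [self_mem_nhdsWithin] with h' hh' using (claimA h' hh').symm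
  -- final assembly
  have hg1 : law P hη = μm 1 := by
    apply ProbabilityMeasure.toMeasure_injective
    show P.map η = P.map (X 1)
    congr 1
    funext ω
    show η ω = ξ ω + 1 * (η ω - ξ ω)
    ring
  have hg0 : law P hξ = μm 0 := by
    apply ProbabilityMeasure.toMeasure_injective
    show P.map ξ = P.map (X 0)
    congr 1
    funext ω
    show ξ ω = ξ ω + 0 * (η ω - ξ ω)
    ring
  have hFTC := intervalIntegral.integral_eq_sub_of_hasDeriv_right_of_le zero_le_one
    (fun t ht => (key t ht).continuousWithinAt)
    (fun t ht => ((key t (Set.Ioo_subset_Icc_self ht)).hasDerivAt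
      (Icc_mem_nhds ht.1 ht.2)).hasDerivWithinAt)
    ((hψcont.mono (by rw [Set.uIcc_of_le zero_le_one])).intervalIntegrable)
  rw [hg1, hg0]
  have hrhs : (∫ h in (0:ℝ)..1,
        ∫ ω, F₁ (law P (hξ.add ((hη.sub hξ).const_mul h)))
            (ξ ω + h * (η ω - ξ ω)) * (η ω - ξ ω) ∂P) = ∫ t in (0:ℝ)..1, ψ t :=
    intervalIntegral.integral_congr (fun t _ => rfl)
  rw [hrhs, hFTC]
end
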